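/- arXiv:1801.06110 — 4 statements merged into one kernel-verified Lean document; each statement's English description precedes it below -/
import Mathlib

section
/- Let p be a prime and let A and B be disjoint finite nonempty sets of prime divisors of p−1. Let y and z be units modulo p such that: y is a q-th power non-residue mod p for every q ∈ A; z is a q-th power non-residue mod p for every q ∈ B; and y is a q-th power residue mod p for every q ∈ B. Then there exists an integer m with 0 ≤ m ≤ j(P(A)) − 1, where P(A) = ∏_{q ∈ A} q, such that y^m·z is a q-th power non-residue mod p for every q ∈ A ∪ B. -/
/-- The Jacobsthal function: the least positive `m` such that among any `m`
consecutive integers there is one coprime to `n`. -/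
noncomputable def jacobsthal (n : ℕ) : ℕ :=
  sInf {m : ℕ | 0 < m ∧ ∀ b : ℤ, ∃ k : ℤ, b < k ∧ k ≤ b + m ∧ IsCoprime k (n : ℤ)}

lemma crt_finset (S : Finset ℕ) (r : ℕ → ℤ) :
    (∀ q ∈ S, Nat.Prime q) → ∃ c : ℤ, ∀ q ∈ S, (q : ℤ) ∣ (c - r q) := by
  classical
  induction S using Finset.induction_on with
  | empty => exact fun _ => ⟨0, by simp⟩
  | @insert q S hqS ih =>
    intro hS
    obtain ⟨c, hc⟩ := ih (fun p hp => hS p (Finset.mem_insert_of_mem hp))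
    have hq : Nat.Prime q := hS q (Finset.mem_insert_self q S)
    have hcop : IsCoprime (q : ℤ) (∏ p ∈ S, (p : ℤ)) := by
      rw [IsCoprime.prod_right_iff]
      intro p hp
      have hpp := hS p (Finset.mem_insert_of_mem hp)
      have hne : q ≠ p := fun h => hqS (h ▸ hp)
      exact Int.isCoprime_iff_gcd_eq_one.mpr (by
        exact_mod_cast (Nat.coprime_primes hq hpp).mpr hne)
    obtain ⟨u, v, huv⟩ := hcop
    refine ⟨c + (r q - c) * (v * ∏ p ∈ S, (p:ℤ)), ?_⟩
    intro s hs
    rcases Finset.mem_insert.mp hs with rfl | hs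
    · refine ⟨(c - r s) * u, ?_⟩
      linear_combination (r s - c) * huv
    · have hdvd : (s:ℤ) ∣ ∏ p ∈ S, (p:ℤ) := Finset.dvd_prod_of_mem _ hs
      have heq : c + (r q - c) * (v * ∏ p ∈ S, (p:ℤ)) - r s
          = (c - r s) + (r q - c) * v * ∏ p ∈ S, (p:ℤ) := by ring
      rw [heq]
      exact dvd_add (hc s hs) (Dvd.dvd.mul_left hdvd _)

lemma jacobsthal_mem (n : ℕ) (hn : 0 < n) :
    0 < jacobsthal n ∧
      ∀ b : ℤ, ∃ k : ℤ, b < k ∧ k ≤ b + jacobsthal n ∧ IsCoprime k (n:ℤ) := by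
  have hnZ : (0:ℤ) < n := by exact_mod_cast hn
  have hne : (n+1) ∈ {m : ℕ | 0 < m ∧ ∀ b : ℤ, ∃ k : ℤ,
      b < k ∧ k ≤ b + m ∧ IsCoprime k (n : ℤ)} := by
    refine ⟨by omega, fun b => ?_⟩
    refine ⟨b + 1 + ((1 - (b+1)) % n), ?_, ?_, ?_⟩
    · have := Int.emod_nonneg (1 - (b+1)) hnZ.ne'
      linarith
    · have := Int.emod_lt_of_pos (1 - (b+1)) hnZ
      push_cast
      linarith
    · have hk : b + 1 + ((1 - (b+1)) % n) = 1 + (n:ℤ) * (-((1 - (b+1)) / n)) := by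
        rw [Int.emod_def]; ring
      rw [hk]
      exact (isCoprime_one_left).add_mul_left_left _
  exact Nat.sInf_mem ⟨n+1, hne⟩

lemma pow_residue_iff {G : Type*} [Group G] [Fintype G] (g : G) (q a : ℕ)
    (hqn : q ∣ orderOf g) :
    (∃ s : ℕ, (g ^ s) ^ q = g ^ a) ↔ q ∣ a := by
  constructor
  · rintro ⟨s, hs⟩
    rw [← pow_mul] at hs
    have hmod : s * q ≡ a [MOD orderOf g] := pow_eq_pow_iff_modEq.mp hs
    have hd : (q:ℤ) ∣ (a : ℤ) - (s*q : ℕ) :=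
      dvd_trans (Int.natCast_dvd_natCast.mpr hqn) hmod.dvd
    have hd2 : (q:ℤ) ∣ ((s*q:ℕ):ℤ) := by push_cast; exact ⟨s, by ring⟩
    have : (q:ℤ) ∣ (a:ℤ) := by
      have := dvd_add hd hd2
      simpa using this
    exact_mod_cast this
  · rintro ⟨t, rfl⟩
    exact ⟨t, by rw [← pow_mul, mul_comm]⟩

theorem stmt8 (p : ℕ) (hp : p.Prime) (A B : Finset ℕ)
    (hAB : Disjoint A B) (hA : A.Nonempty) (hB : B.Nonempty)
    (hAdvd : ∀ q ∈ A, q.Prime ∧ q ∣ p - 1)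
    (hBdvd : ∀ q ∈ B, q.Prime ∧ q ∣ p - 1)
    (y z : (ZMod p)ˣ)
    (hyA : ∀ q ∈ A, ¬ ∃ x : (ZMod p)ˣ, x ^ q = y)
    (hzB : ∀ q ∈ B, ¬ ∃ x : (ZMod p)ˣ, x ^ q = z)
    (hyB : ∀ q ∈ B, ∃ x : (ZMod p)ˣ, x ^ q = y) :
    ∃ m : ℕ, m + 1 ≤ jacobsthal (∏ q ∈ A, q) ∧
      ∀ q ∈ A ∪ B, ¬ ∃ x : (ZMod p)ˣ, x ^ q = y ^ m * z := by
  classical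
  haveI : Fact p.Prime := ⟨hp⟩
  obtain ⟨g, hg⟩ := IsCyclic.exists_generator (α := (ZMod p)ˣ)
  have hord : orderOf g = p - 1 := by
    rw [orderOf_eq_card_of_forall_mem_zpowers hg, Nat.card_eq_fintype_card, ZMod.card_units_eq_totient,
      Nat.totient_prime hp]
  have hsurj : ∀ x : (ZMod p)ˣ, ∃ k : ℕ, g ^ k = x := by
    intro x
    have := hg x
    rwa [← mem_powers_iff_mem_zpowers, Submonoid.mem_powers_iff] at this
  obtain ⟨a, ha⟩ := hsurj y
  obtain ⟨b, hb⟩ := hsurj z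
  have key : ∀ q : ℕ, q ∣ p - 1 → ∀ t : ℕ,
      ((∃ x : (ZMod p)ˣ, x ^ q = g ^ t) ↔ q ∣ t) := by
    intro q hqd t
    rw [← pow_residue_iff g q t (hord ▸ hqd)]
    constructor
    · rintro ⟨x, hx⟩; obtain ⟨s, rfl⟩ := hsurj x; exact ⟨s, hx⟩
    · rintro ⟨s, hs⟩; exact ⟨g^s, hs⟩
  have hAa : ∀ q ∈ A, ¬ q ∣ a := by
    intro q hqA hdvd
    exact hyA q hqA (ha ▸ (key q (hAdvd q hqA).2 a).mpr hdvd)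
  have hBa : ∀ q ∈ B, q ∣ a := by
    intro q hqB
    have h := hyB q hqB
    rw [← ha] at h
    exact (key q (hBdvd q hqB).2 a).mp h
  have hBb : ∀ q ∈ B, ¬ q ∣ b := by
    intro q hqB hdvd
    exact hzB q hqB (hb ▸ (key q (hBdvd q hqB).2 b).mpr hdvd)
  -- residues to avoid
  have hr : ∀ q ∈ A, ∃ r : ℤ, (q:ℤ) ∣ ((a:ℤ) * r + b) := by
    intro q hqA
    have hq := (hAdvd q hqA).1
    have hcop : IsCoprime (q:ℤ) (a:ℤ) := by
      rw [Int.isCoprime_iff_gcd_eq_one]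
      exact_mod_cast (hq.coprime_iff_not_dvd.mpr (hAa q hqA))
    obtain ⟨u, v, huv⟩ := hcop
    exact ⟨-(v*b), (b:ℤ)*u, by linear_combination (-(b:ℤ)) * huv⟩
  have hrfun : ∃ r : ℕ → ℤ, ∀ q ∈ A, (q:ℤ) ∣ ((a:ℤ) * r q + b) := by
    refine ⟨fun q => if h : q ∈ A then (hr q h).choose else 0, fun q hq => ?_⟩
    simp only [dif_pos hq]
    exact (hr q hq).choose_spec
  obtain ⟨r, hrspec⟩ := hrfun
  obtain ⟨c, hc⟩ := crt_finset A r (fun q hq => (hAdvd q hq).1)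
  set n : ℕ := ∏ q ∈ A, q with hn
  have hnpos : 0 < n := Finset.prod_pos (fun q hq => (hAdvd q hq).1.pos)
  obtain ⟨hjpos, hjprop⟩ := jacobsthal_mem n hnpos
  obtain ⟨k, hk1, hk2, hk3⟩ := hjprop (-c - 1)
  refine ⟨(k + c).toNat, ?_, ?_⟩
  · have hm : ((k+c).toNat : ℤ) = k + c := Int.toNat_of_nonneg (by linarith)
    have : ((k+c).toNat : ℤ) + 1 ≤ (jacobsthal n : ℤ) := by
      rw [hm]; push_cast at hk2 ⊢; linarith
    exact_mod_cast this
  · set m : ℕ := (k+c).toNat with hmdef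
    have hm : (m : ℤ) = k + c := Int.toNat_of_nonneg (by linarith)
    intro q hq
    have hqd : q ∣ p - 1 := by
      rcases Finset.mem_union.mp hq with h | h
      · exact (hAdvd q h).2
      · exact (hBdvd q h).2
    rw [← ha, ← hb, ← pow_mul, ← pow_add, key q hqd (a*m + b)]
    rcases Finset.mem_union.mp hq with hqA | hqB
    · -- q ∈ A
      intro hdvd
      have hqp := (hAdvd q hqA).1
      have hqint : Prime (q:ℤ) := Nat.prime_iff_prime_int.mp hqp
      have h1 : (q:ℤ) ∣ (a:ℤ) * m + b := by exact_mod_cast hdvd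
      have h2 := hrspec q hqA
      have h3 : (q:ℤ) ∣ (a:ℤ) * ((m:ℤ) - r q) := by
        have := dvd_sub h1 h2
        have heq : (a:ℤ) * m + b - ((a:ℤ) * r q + b) = (a:ℤ) * ((m:ℤ) - r q) := by ring
        rwa [heq] at this
      have hqa : ¬ (q:ℤ) ∣ (a:ℤ) := by
        intro h; exact hAa q hqA (by exact_mod_cast h)
      have h4 : (q:ℤ) ∣ ((m:ℤ) - r q) := (hqint.dvd_mul.mp h3).resolve_left hqa
      have h5 : (q:ℤ) ∣ k := by
        have := dvd_sub h4 (hc q hqA)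
        have heq : (m:ℤ) - r q - (c - r q) = k := by rw [hm]; ring
        rwa [heq] at this
      have h6 : (q:ℤ) ∣ (n:ℤ) := by
        exact_mod_cast Int.natCast_dvd_natCast.mpr (Finset.dvd_prod_of_mem _ hqA)
      exact hqint.not_unit (hk3.isUnit_of_dvd' h5 h6)
    · -- q ∈ B
      intro hdvd
      have : q ∣ b := (Nat.dvd_add_right ((hBa q hqB).mul_left m)).mp
        (by rwa [mul_comm a m] at hdvd)
      exact hBb q hqB this
end

section
/- Let p be a prime, for each prime divisor q of p−1 let 𝐠_p(q) be the least positive integer that is a q-th power non-residue mod p, let g₁ < g₂ < … < g_s be the distinct values taken by 𝐠_p(q) as q ranges over the prime divisors of p−1, and let A_i = {q prime : q | p−1, 𝐠_p(q) = g_i}. Then there exist integers m₁, …, m_s with 0 ≤ m_i ≤ j(∏_{q ∈ A_i} q) − 1 for each i and m_s = 1 such that the residue class of ∏_{i=1}^{s} g_i^{m_i} modulo p is a q-th power non-residue for every prime divisor q of p−1. -/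
/-- The least positive integer whose residue class mod `p` is not a `d`-th power
residue, i.e. is not of the form `x ^ d` for a unit `x` of `ZMod p`. -/
noncomputable def leastDPowNonRes (p d : ℕ) : ℕ :=
  sInf {n : ℕ | 0 < n ∧ ¬ ∃ x : (ZMod p)ˣ, ((x : ZMod p)) ^ d = (n : ZMod p)}

/-- `G p` is the (finite) set of distinct values `g₁ < g₂ < ⋯ < g_s` taken by
`q ↦ 𝐠_p(q)` as `q` ranges over the prime divisors of `p - 1`. -/
noncomputable def resValues (p : ℕ) : Finset ℕ :=
  (p - 1).primeFactors.image (leastDPowNonRes p)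

/-- `A_i`: the set of prime divisors `q` of `p - 1` with `𝐠_p(q) = g`. -/
noncomputable def resClass (p g : ℕ) : Finset ℕ :=
  (p - 1).primeFactors.filter (fun q => leastDPowNonRes p q = g)

/-! ### Auxiliary material -/

section Psi
variable (p : ℕ) [Fact p.Prime]

noncomputable def zetAux : (ZMod p)ˣ :=
  Classical.choose (IsCyclic.exists_generator (α := (ZMod p)ˣ))

lemma zetAux_spec : ∀ x : (ZMod p)ˣ, x ∈ Subgroup.zpowers (zetAux p) :=
  Classical.choose_spec (IsCyclic.exists_generator (α := (ZMod p)ˣ))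

lemma orderOf_zetAux : orderOf (zetAux p) = p - 1 := by
  rw [orderOf_eq_card_of_forall_mem_zpowers (zetAux_spec p), Nat.card_eq_fintype_card,
    ZMod.card_units_eq_totient, Nat.totient_prime (Fact.out : p.Prime)]

noncomputable def psiAux (q : ℕ) (a : (ZMod p)ˣ) : ZMod q :=
  ((Classical.choose (Subgroup.mem_zpowers_iff.mp (zetAux_spec p a)) : ℤ) : ZMod q)

variable {p}

lemma psiAux_spec {q : ℕ} (hd : q ∣ p - 1) {a : (ZMod p)ˣ} {e : ℤ} (he : zetAux p ^ e = a) :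
    psiAux p q a = (e : ZMod q) := by
  set e' := Classical.choose (Subgroup.mem_zpowers_iff.mp (zetAux_spec p a)) with he'def
  have he' : zetAux p ^ e' = a :=
    Classical.choose_spec (Subgroup.mem_zpowers_iff.mp (zetAux_spec p a))
  have : ((p - 1 : ℕ) : ℤ) ∣ e' - e := by
    rw [← orderOf_zetAux p] at *
    exact orderOf_dvd_sub_iff_zpow_eq_zpow.mpr (he'.trans he.symm)
  have hq : ((q : ℕ) : ℤ) ∣ e' - e := dvd_trans (Int.natCast_dvd_natCast.mpr hd) this
  have := (ZMod.intCast_zmod_eq_zero_iff_dvd (e' - e) q).mpr hq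
  push_cast at this
  have := sub_eq_zero.mp this
  simpa [psiAux, ← he'def] using this

lemma psiAux_pow {q : ℕ} (hd : q ∣ p - 1) (a : (ZMod p)ˣ) (m : ℕ) :
    psiAux p q (a ^ m) = (m : ZMod q) * psiAux p q a := by
  obtain ⟨e, he⟩ := Subgroup.mem_zpowers_iff.mp (zetAux_spec p a)
  have h1 : psiAux p q a = (e : ZMod q) := psiAux_spec hd he
  have h2 : zetAux p ^ (e * (m : ℤ)) = a ^ m := by
    rw [zpow_mul, he, zpow_natCast]
  rw [mul_comm] at h2
  rw [psiAux_spec hd h2, h1]; push_cast; ring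

lemma psiAux_mul {q : ℕ} (hd : q ∣ p - 1) (a b : (ZMod p)ˣ) :
    psiAux p q (a * b) = psiAux p q a + psiAux p q b := by
  obtain ⟨e, he⟩ := Subgroup.mem_zpowers_iff.mp (zetAux_spec p a)
  obtain ⟨f, hf⟩ := Subgroup.mem_zpowers_iff.mp (zetAux_spec p b)
  have h2 : zetAux p ^ (e + f) = a * b := by rw [zpow_add, he, hf]
  rw [psiAux_spec hd h2, psiAux_spec hd he, psiAux_spec hd hf]; push_cast; ring

lemma psiAux_one {q : ℕ} (hd : q ∣ p - 1) : psiAux p q 1 = 0 := by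
  have : zetAux p ^ (0 : ℤ) = (1 : (ZMod p)ˣ) := zpow_zero _
  rw [psiAux_spec hd this]; simp

lemma psiAux_prod {q : ℕ} (hd : q ∣ p - 1) (S : Finset ℕ) (f : ℕ → (ZMod p)ˣ) (m : ℕ → ℕ) :
    psiAux p q (∏ i ∈ S, f i ^ m i) = ∑ i ∈ S, (m i : ZMod q) * psiAux p q (f i) := by
  classical
  induction S using Finset.induction with
  | empty => simpa using psiAux_one hd
  | insert _ _ hnot ih =>
    rw [Finset.prod_insert hnot, Finset.sum_insert hnot, psiAux_mul hd, psiAux_pow hd, ih]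

lemma residueAux_iff {q : ℕ} (hd : q ∣ p - 1) (a : (ZMod p)ˣ) :
    (∃ x : (ZMod p)ˣ, x ^ q = a) ↔ psiAux p q a = 0 := by
  constructor
  · rintro ⟨x, rfl⟩
    rw [psiAux_pow hd]; simp [ZMod.natCast_self]
  · intro h
    obtain ⟨e, he⟩ := Subgroup.mem_zpowers_iff.mp (zetAux_spec p a)
    rw [psiAux_spec hd he] at h
    obtain ⟨d, hd'⟩ := (ZMod.intCast_zmod_eq_zero_iff_dvd e q).mp h
    refine ⟨zetAux p ^ d, ?_⟩
    rw [← zpow_natCast (zetAux p ^ d), ← zpow_mul, ← he, hd', mul_comm]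

lemma psiAux_zetAux_ne {q : ℕ} (hq : q.Prime) (hd : q ∣ p - 1) : psiAux p q (zetAux p) ≠ 0 := by
  haveI : Fact (1 < q) := ⟨hq.one_lt⟩
  have : zetAux p ^ (1 : ℤ) = zetAux p := zpow_one _
  rw [psiAux_spec hd this]
  simpa using (one_ne_zero : (1 : ZMod q) ≠ 0)

lemma unitsAux_pow_iff {q : ℕ} (a : (ZMod p)ˣ) :
    (∃ x : (ZMod p)ˣ, (x : ZMod p) ^ q = (a : ZMod p)) ↔ ∃ x : (ZMod p)ˣ, x ^ q = a := by
  constructor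
  · rintro ⟨x, hx⟩
    exact ⟨x, Units.ext (by simpa using hx)⟩
  · rintro ⟨x, hx⟩
    exact ⟨x, by rw [← Units.val_pow_eq_pow_val, hx]⟩

end Psi

/-! ### Units attached to natural numbers -/

section Un
variable (p : ℕ) [Fact p.Prime]

noncomputable def unAux (g : ℕ) : (ZMod p)ˣ :=
  if h : IsUnit ((g : ℕ) : ZMod p) then h.unit else 1

variable {p}

lemma unAux_coe {g : ℕ} (h0 : 0 < g) (hlt : g < p) :
    ((unAux p g : (ZMod p)ˣ) : ZMod p) = (g : ZMod p) := by
  have hne : ((g : ℕ) : ZMod p) ≠ 0 := by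
    rw [Ne, ZMod.natCast_eq_zero_iff]
    intro hdvd
    exact absurd (Nat.le_of_dvd h0 hdvd) (by omega)
  have h : IsUnit ((g : ℕ) : ZMod p) := isUnit_iff_ne_zero.mpr hne
  rw [unAux, dif_pos h, h.unit_spec]

end Un

/-! ### Facts about `leastDPowNonRes` -/

section LNR
variable {p : ℕ} [Fact p.Prime]

lemma lNR_mem {q : ℕ} (hq : q.Prime) (hd : q ∣ p - 1) :
    (0 < leastDPowNonRes p q ∧
      ¬ ∃ x : (ZMod p)ˣ, ((x : ZMod p)) ^ q = ((leastDPowNonRes p q : ℕ) : ZMod p)) ∧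
    leastDPowNonRes p q < p := by
  set n0 := (zetAux p : ZMod p).val with hn0
  have hcoe : ((n0 : ℕ) : ZMod p) = ((zetAux p : (ZMod p)ˣ) : ZMod p) := by
    rw [hn0, ZMod.natCast_val, ZMod.cast_id]
  have h0 : 0 < n0 := by
    rcases Nat.eq_zero_or_pos n0 with h | h
    · exact absurd (((zetAux p : ZMod p).val_eq_zero).mp h) (Units.ne_zero _)
    · exact h
  have hmem : n0 ∈ {n : ℕ | 0 < n ∧ ¬ ∃ x : (ZMod p)ˣ, ((x : ZMod p)) ^ q = (n : ZMod p)} := by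
    refine ⟨h0, ?_⟩
    rw [hcoe, unitsAux_pow_iff, residueAux_iff hd]
    exact psiAux_zetAux_ne hq hd
  have hmem' := Nat.sInf_mem ⟨n0, hmem⟩
  have hle : leastDPowNonRes p q ≤ n0 := Nat.sInf_le hmem
  exact ⟨hmem', lt_of_le_of_lt hle ((zetAux p : ZMod p).val_lt)⟩

lemma lNR_pos {q : ℕ} (hq : q.Prime) (hd : q ∣ p - 1) : 0 < leastDPowNonRes p q :=
  (lNR_mem hq hd).1.1

lemma lNR_lt {q : ℕ} (hq : q.Prime) (hd : q ∣ p - 1) : leastDPowNonRes p q < p :=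
  (lNR_mem hq hd).2

lemma psiAux_lNR_ne {q : ℕ} (hq : q.Prime) (hd : q ∣ p - 1) :
    psiAux p q (unAux p (leastDPowNonRes p q)) ≠ 0 := by
  intro h
  obtain ⟨x, hx⟩ := (residueAux_iff hd _).mpr h
  refine (lNR_mem hq hd).1.2 ⟨x, ?_⟩
  rw [← unAux_coe (lNR_pos hq hd) (lNR_lt hq hd), ← hx, Units.val_pow_eq_pow_val]

lemma psiAux_small_eq_zero {q : ℕ} (hq : q.Prime) (hd : q ∣ p - 1) {g' : ℕ}
    (h0 : 0 < g') (hltp : g' < p) (hlt : g' < leastDPowNonRes p q) :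
    psiAux p q (unAux p g') = 0 := by
  have hnot := Nat.notMem_of_lt_sInf (s :=
    {n : ℕ | 0 < n ∧ ¬ ∃ x : (ZMod p)ˣ, ((x : ZMod p)) ^ q = (n : ZMod p)}) hlt
  simp only [Set.mem_setOf_eq, not_and, not_not] at hnot
  have hex := hnot h0
  rw [← unAux_coe h0 hltp, unitsAux_pow_iff, residueAux_iff hd] at hex
  exact hex

end LNR

/-! ### Jacobsthal facts -/

lemma jacSet_nonempty (n : ℕ) (hn : 0 < n) :
    {m : ℕ | 0 < m ∧ ∀ b : ℤ, ∃ k : ℤ, b < k ∧ k ≤ b + m ∧ IsCoprime k (n : ℤ)}.Nonempty := by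
  refine ⟨n, hn, fun b => ?_⟩
  have hn' : (0 : ℤ) < n := by exact_mod_cast hn
  refine ⟨b + 1 + (-b) % n, ?_, ?_, ?_⟩
  · have := Int.emod_nonneg (-b) (by positivity : (n:ℤ) ≠ 0) ; omega
  · have := Int.emod_lt_of_pos (-b) hn' ; omega
  · have : (n : ℤ) ∣ (b + 1 + (-b) % n) - 1 := by
      have h1 : (-b) % n = -b - n * ((-b) / n) := by rw [Int.emod_def]
      refine ⟨-((-b)/n), by rw [h1]; ring⟩
    obtain ⟨t, ht⟩ := this
    have : b + 1 + (-b) % n = 1 + n * t := by omega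
    rw [this]
    exact (isCoprime_one_left).add_mul_left_left t

lemma jac_prop (n : ℕ) (hn : 0 < n) :
    ∀ b : ℤ, ∃ k : ℤ, b < k ∧ k ≤ b + (jacobsthal n : ℤ) ∧ IsCoprime k (n : ℤ) := by
  have := Nat.sInf_mem (jacSet_nonempty n hn)
  exact this.2

lemma jac_two_le (n : ℕ) (hn : 2 ≤ n) : 2 ≤ jacobsthal n := by
  have hmem := Nat.sInf_mem (jacSet_nonempty n (by omega))
  by_contra h
  push_neg at h
  unfold jacobsthal at h
  have h0 := hmem.1
  have h1 : sInf {m : ℕ | 0 < m ∧ ∀ b : ℤ, ∃ k : ℤ, b < k ∧ k ≤ b + m ∧ IsCoprime k (n : ℤ)}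
      = 1 := by omega
  rw [h1] at hmem
  obtain ⟨k, hk1, hk2, hk3⟩ := hmem.2 ((n : ℤ) - 1)
  have : k = n := by push_cast at hk2 ⊢; omega
  subst this
  have := Int.isCoprime_iff_gcd_eq_one.mp hk3
  simp [Int.gcd] at this
  omega

/-! ### Chinese remaindering over a finset of primes -/

lemma crt_piece {s : ℕ} (u v T' : ℤ) (q n : ℕ) (cq : ℤ)
    (h1 : ((u * q : ℤ) : ZMod s) = 0) (h2 : ((v * n : ℤ) : ZMod s) = 1) :
    ((T' * (u * q) + cq * (v * n) : ℤ) : ZMod s) = ((cq : ℤ) : ZMod s) := by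
  push_cast at h1 h2 ⊢
  rw [h1, h2]; ring

lemma crt_piece' {s : ℕ} (u v T' : ℤ) (q n : ℕ) (cq : ℤ)
    (h1 : ((v * n : ℤ) : ZMod s) = 0) (h2 : ((u * q : ℤ) : ZMod s) = 1) :
    ((T' * (u * q) + cq * (v * n) : ℤ) : ZMod s) = ((T' : ℤ) : ZMod s) := by
  push_cast at h1 h2 ⊢
  rw [h1, h2]; ring

lemma crt_finset_s9 (A : Finset ℕ) (hA : ∀ q ∈ A, q.Prime) (c : (q : ℕ) → ZMod q) :
    ∃ T : ℤ, ∀ q ∈ A, ((T : ZMod q)) = c q := by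
  classical
  induction A using Finset.induction with
  | empty => exact ⟨0, by simp⟩
  | @insert q B hqB ih =>
    obtain ⟨T', hT'⟩ := ih (fun r hr => hA r (Finset.mem_insert_of_mem hr))
    have hq : q.Prime := hA q (Finset.mem_insert_self q B)
    haveI : Fact q.Prime := ⟨hq⟩
    set n : ℕ := ∏ r ∈ B, r with hn
    have hcopn : Nat.Coprime q n := by
      rw [hq.coprime_iff_not_dvd]
      intro hdvd
      obtain ⟨r, hrB, hqr⟩ := (hq.prime.dvd_finset_prod_iff _).mp hdvd
      have : q = r :=
        ((Nat.prime_dvd_prime_iff_eq hq (hA r (Finset.mem_insert_of_mem hrB))).mp hqr)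
      exact hqB (this ▸ hrB)
    have hcop : IsCoprime (q : ℤ) (n : ℤ) := by
      rw [Int.isCoprime_iff_gcd_eq_one, Int.gcd_natCast_natCast]
      exact hcopn
    obtain ⟨u, v, huv⟩ := hcop
    refine ⟨T' * (u * q) + ((c q).val : ℤ) * (v * n), fun r hr => ?_⟩
    rcases Finset.mem_insert.mp hr with h | hrB
    · have h1 : ((u * q : ℤ) : ZMod r) = 0 := by
        rw [ZMod.intCast_zmod_eq_zero_iff_dvd, h]
        exact Dvd.dvd.mul_left (dvd_refl (q:ℤ)) u
      have h2 : ((v * n : ℤ) : ZMod r) = 1 := by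
        have h3 : ((u * q + v * n : ℤ) : ZMod r) = 1 := by rw [huv]; simp
        push_cast at h1 h3 ⊢
        rw [h1] at h3; linear_combination h3
      rw [crt_piece u v T' q n _ h1 h2, h]
      simp [ZMod.natCast_val, ZMod.cast_id]
    · have hrn : (r : ℤ) ∣ (n : ℤ) := Int.natCast_dvd_natCast.mpr (Finset.dvd_prod_of_mem _ hrB)
      have h1 : ((v * n : ℤ) : ZMod r) = 0 := by
        rw [ZMod.intCast_zmod_eq_zero_iff_dvd]
        exact Dvd.dvd.mul_left hrn v
      have h2 : ((u * q : ℤ) : ZMod r) = 1 := by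
        have h3 : ((u * q + v * n : ℤ) : ZMod r) = 1 := by rw [huv]; simp
        push_cast at h1 h3 ⊢
        rw [h1] at h3; linear_combination h3
      rw [crt_piece' u v T' q n _ h1 h2]
      exact hT' r hrB

lemma choose_m0 (A : Finset ℕ) (hA : ∀ q ∈ A, q.Prime) (c : (q : ℕ) → ZMod q) :
    ∃ m0 : ℕ, m0 + 1 ≤ jacobsthal (∏ q ∈ A, q) ∧ ∀ q ∈ A, (m0 : ZMod q) ≠ c q := by
  obtain ⟨T, hT⟩ := crt_finset_s9 A hA c
  set n : ℕ := ∏ q ∈ A, q with hn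
  have hn0 : 0 < n := Finset.prod_pos (fun q hq => (hA q hq).pos)
  obtain ⟨k, hk1, hk2, hk3⟩ := jac_prop n hn0 (-T - 1)
  refine ⟨(k + T).toNat, ?_, ?_⟩
  · have h0 : 0 ≤ k + T := by omega
    have := Int.toNat_of_nonneg h0
    omega
  · intro q hqA heq
    haveI : Fact q.Prime := ⟨hA q hqA⟩
    have h0 : 0 ≤ k + T := by omega
    have hcast : (((k + T).toNat : ℕ) : ZMod q) = ((k + T : ℤ) : ZMod q) := by
      rw [← Int.cast_natCast, Int.toNat_of_nonneg h0]
    rw [hcast] at heq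
    push_cast at heq
    rw [hT q hqA] at heq
    have hk0 : ((k : ℤ) : ZMod q) = 0 := by linear_combination heq
    have hdvd : (q : ℤ) ∣ k := (ZMod.intCast_zmod_eq_zero_iff_dvd k q).mp hk0
    have hqn : (q : ℤ) ∣ (n : ℤ) := Int.natCast_dvd_natCast.mpr (Finset.dvd_prod_of_mem _ hqA)
    have : IsUnit ((q : ℤ)) := hk3.isUnit_of_dvd' hdvd hqn
    rw [Int.isUnit_iff] at this
    have := (hA q hqA).two_le
    omega

/-! ### resClass / resValues basic facts -/

section RV
variable {p : ℕ} [Fact p.Prime]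

lemma mem_resClass {q g : ℕ} (h : q ∈ resClass p g) :
    q.Prime ∧ q ∣ p - 1 ∧ leastDPowNonRes p q = g := by
  rw [resClass, Finset.mem_filter, Nat.mem_primeFactors] at h
  exact ⟨h.1.1, h.1.2.1, h.2⟩

lemma resValues_bounds {g : ℕ} (hg : g ∈ resValues p) : 0 < g ∧ g < p := by
  rw [resValues, Finset.mem_image] at hg
  obtain ⟨q, hq, rfl⟩ := hg
  rw [Nat.mem_primeFactors] at hq
  exact ⟨lNR_pos hq.1 hq.2.1, lNR_lt hq.1 hq.2.1⟩

lemma resValues_class_nonempty {g : ℕ} (hg : g ∈ resValues p) :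
    ∃ q, q ∈ resClass p g := by
  rw [resValues, Finset.mem_image] at hg
  obtain ⟨q, hq, rfl⟩ := hg
  exact ⟨q, by rw [resClass, Finset.mem_filter]; exact ⟨hq, rfl⟩⟩

end RV

/-! ### The main inductive construction -/

lemma main_aux (p : ℕ) [Fact p.Prime] : ∀ (n : ℕ) (S : Finset ℕ),
    S.card = n → S ⊆ resValues p →
    ∃ m : ℕ → ℕ,
      (∀ g ∈ S, m g + 1 ≤ jacobsthal (∏ q ∈ resClass p g, q)) ∧
      (∀ g ∈ S, (∀ g' ∈ S, g' ≤ g) → m g = 1) ∧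
      (∀ g ∈ S, ∀ q ∈ resClass p g,
        (∑ g' ∈ S, ((m g' : ZMod q) * psiAux p q (unAux p g'))) ≠ 0) := by
  classical
  intro n
  induction n with
  | zero =>
    intro S hcard _
    rw [Finset.card_eq_zero] at hcard
    subst hcard
    exact ⟨fun _ => 1, by simp, by simp, by simp⟩
  | succ n ih =>
    intro S hcard hsub
    by_cases hn : n = 0
    · -- S is a singleton {g0}; take m ≡ 1
      subst hn
      rw [Finset.card_eq_one] at hcard
      obtain ⟨g0, rfl⟩ := hcard
      have hg0 : g0 ∈ resValues p := hsub (Finset.mem_singleton_self g0)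
      refine ⟨fun _ => 1, ?_, ?_, ?_⟩
      · intro g hgmem
        rw [Finset.mem_singleton] at hgmem; subst hgmem
        obtain ⟨q0, hq0⟩ := resValues_class_nonempty hg0
        have hq0p := (mem_resClass hq0).1
        have hdvd : q0 ∣ ∏ q ∈ resClass p g, q := Finset.dvd_prod_of_mem _ hq0
        have hpos : 0 < ∏ q ∈ resClass p g, q :=
          Finset.prod_pos (fun q hq => (mem_resClass hq).1.pos)
        have : 2 ≤ ∏ q ∈ resClass p g, q :=
          le_trans hq0p.two_le (Nat.le_of_dvd hpos hdvd)
        exact jac_two_le _ this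
      · intro g _ _; rfl
      · intro g hgmem q hq
        rw [Finset.mem_singleton] at hgmem; subst hgmem
        obtain ⟨hqp, hqd, hql⟩ := mem_resClass hq
        rw [Finset.sum_singleton, Nat.cast_one, one_mul]
        rw [← hql]
        exact psiAux_lNR_ne hqp hqd
    · -- |S| ≥ 2 : remove the minimum g0
      have hSne : S.Nonempty := Finset.card_pos.mp (by omega)
      set g0 : ℕ := S.min' hSne with hg0def
      have hg0S : g0 ∈ S := S.min'_mem hSne
      set S' : Finset ℕ := S.erase g0 with hS'def
      have hS'card : S'.card = n := by
        rw [hS'def, Finset.card_erase_of_mem hg0S, hcard]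
        omega
      have hS'sub : S' ⊆ resValues p := fun x hx => hsub (Finset.mem_of_mem_erase hx)
      obtain ⟨m', hm'1, hm'2, hm'3⟩ := ih S' hS'card hS'sub
      have hS'ne : S'.Nonempty := Finset.card_pos.mp (by omega)
      have hg0res : g0 ∈ resValues p := hsub hg0S
      -- choose m0 via CRT + Jacobsthal
      set A : Finset ℕ := resClass p g0 with hAdef
      have hA : ∀ q ∈ A, q.Prime := fun q hq => (mem_resClass hq).1
      set c : (q : ℕ) → ZMod q := fun q =>
        (-(∑ g' ∈ S', ((m' g' : ZMod q) * psiAux p q (unAux p g')))) *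
          (psiAux p q (unAux p g0))⁻¹ with hcdef
      obtain ⟨m0, hm0jac, hm0ne⟩ := choose_m0 A hA c
      refine ⟨Function.update m' g0 m0, ?_, ?_, ?_⟩
      · intro g hgS
        by_cases hgg : g = g0
        · subst hgg
          rw [Function.update_self]
          exact hm0jac
        · rw [Function.update_of_ne hgg]
          exact hm'1 g (Finset.mem_erase.mpr ⟨hgg, hgS⟩)
      · intro g hgS hmax
        obtain ⟨g1, hg1⟩ := hS'ne
        have hg1S : g1 ∈ S := Finset.mem_of_mem_erase hg1
        have hg1ne : g1 ≠ g0 := (Finset.mem_erase.mp hg1).1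
        have hgg : g ≠ g0 := by
          intro h; subst h
          have h1 : g1 ≤ g0 := hmax g1 hg1S
          have h2 : g0 ≤ g1 := S.min'_le g1 hg1S
          exact hg1ne (le_antisymm h1 h2)
        rw [Function.update_of_ne hgg]
        exact hm'2 g (Finset.mem_erase.mpr ⟨hgg, hgS⟩)
             (fun g' hg' => hmax g' (Finset.mem_of_mem_erase hg'))
      · intro g hgS q hq
        obtain ⟨hqp, hqd, hql⟩ := mem_resClass hq
        haveI : Fact q.Prime := ⟨hqp⟩
        set f : ℕ → ZMod q := fun g' =>
          ((Function.update m' g0 m0 g' : ℕ) : ZMod q) * psiAux p q (unAux p g') with hfdef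
        have hsplit : (∑ g' ∈ S, f g') = f g0 + ∑ g' ∈ S', f g' :=
          (Finset.add_sum_erase S f hg0S).symm
        have hfS' : ∀ g' ∈ S', f g' = ((m' g' : ZMod q) * psiAux p q (unAux p g')) := by
          intro g' hg'
          have : g' ≠ g0 := (Finset.mem_erase.mp hg').1
          rw [hfdef]; simp only [Function.update_of_ne this]
        have hsum' : (∑ g' ∈ S', f g')
            = ∑ g' ∈ S', ((m' g' : ZMod q) * psiAux p q (unAux p g')) :=
          Finset.sum_congr rfl hfS'
        by_cases hgg : g = g0
        · -- q ∈ A; use the choice of m0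
          subst hgg
          have hqA : q ∈ A := hq
          intro hzero
          apply hm0ne q hqA
          rw [hsplit, hsum'] at hzero
          have hfg0 : f g0 = (m0 : ZMod q) * psiAux p q (unAux p g0) := by
            rw [hfdef]; simp only [Function.update_self]
          rw [hfg0] at hzero
          have hpsine : psiAux p q (unAux p g0) ≠ 0 := by
            rw [← hql]; exact psiAux_lNR_ne hqp hqd
          rw [hcdef]
          field_simp
          linear_combination hzero
        · -- g > g0, so the g0 term vanishes
          have hgS' : g ∈ S' := Finset.mem_erase.mpr ⟨hgg, hgS⟩
          have hg0lt : g0 < g := lt_of_le_of_ne (S.min'_le g hgS) (fun h => hgg h.symm)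
          have hb := resValues_bounds hg0res
          have hpsi0 : psiAux p q (unAux p g0) = 0 := by
            apply psiAux_small_eq_zero hqp hqd hb.1 hb.2
            rw [hql]; exact hg0lt
          have hfg0 : f g0 = 0 := by rw [hfdef]; simp [hpsi0]
          rw [hsplit, hsum', hfg0, zero_add]
          exact hm'3 g hgS' q hq

/-! ### The theorem -/

theorem stmt9 (p : ℕ) (hp : p.Prime) :
    ∃ m : ℕ → ℕ,
      (∀ g ∈ resValues p, m g + 1 ≤ jacobsthal (∏ q ∈ resClass p g, q)) ∧
      (∀ g ∈ resValues p, (∀ g' ∈ resValues p, g' ≤ g) → m g = 1) ∧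
      ∀ q ∈ (p - 1).primeFactors,
        ¬ ∃ x : (ZMod p)ˣ,
            (x : ZMod p) ^ q = ((∏ g ∈ resValues p, g ^ m g : ℕ) : ZMod p) := by
  haveI : Fact p.Prime := ⟨hp⟩
  obtain ⟨m, h1, h2, h3⟩ := main_aux p (resValues p).card (resValues p) rfl (subset_refl _)
  refine ⟨m, h1, h2, ?_⟩
  intro q hq
  have hq' := hq
  rw [Nat.mem_primeFactors] at hq'
  obtain ⟨hqp, hqd, _⟩ := hq'
  haveI : Fact q.Prime := ⟨hqp⟩
  set g : ℕ := leastDPowNonRes p q with hgdef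
  have hg : g ∈ resValues p := by
    rw [resValues, Finset.mem_image]; exact ⟨q, hq, rfl⟩
  have hqc : q ∈ resClass p g := by
    rw [resClass, Finset.mem_filter]; exact ⟨hq, rfl⟩
  have hkey := h3 g hg q hqc
  -- rewrite the natural-number product as a coercion of a unit product
  have hprod : ((∏ g' ∈ resValues p, g' ^ m g' : ℕ) : ZMod p)
      = ((∏ g' ∈ resValues p, unAux p g' ^ m g' : (ZMod p)ˣ) : ZMod p) := by
    push_cast
    refine Finset.prod_congr rfl (fun g' hg' => ?_)
    have hb := resValues_bounds hg'
    rw [unAux_coe hb.1 hb.2]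
  rw [hprod]
  rw [unitsAux_pow_iff, residueAux_iff hqd]
  rw [psiAux_prod hqd]
  exact hkey
end

section
/- Let p be a prime, let d be a divisor of p−1 with d ≥ 2, and let g = 𝐠_p(d) be the least positive integer whose residue class mod p is not a d-th power residue. Then every positive integer n ≤ p−1 all of whose prime factors are less than g is a d-th power residue mod p, and consequently the number of positive integers n ≤ p−1 all of whose prime factors are less than g is at most (p−1)/d. -/
private theorem part1 (p d : ℕ) :
    ∀ n : ℕ, 0 < n →
      (∀ q : ℕ, q.Prime → q ∣ n → q < leastDPowNonRes p d) →
      ∃ x : (ZMod p)ˣ, (x : ZMod p) ^ d = (n : ZMod p) := by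
  have key : ∀ n : ℕ, 0 < n → n < leastDPowNonRes p d →
      ∃ x : (ZMod p)ˣ, (x : ZMod p) ^ d = (n : ZMod p) := by
    intro n hn hlt
    by_contra h
    have : n ∈ {n : ℕ | 0 < n ∧ ¬ ∃ x : (ZMod p)ˣ, ((x : ZMod p)) ^ d = (n : ZMod p)} :=
      ⟨hn, h⟩
    exact absurd (Nat.sInf_le this) (not_le.mpr hlt)
  intro n
  induction n using Nat.strong_induction_on with
  | _ n ih =>
    intro hn hfac
    rcases eq_or_lt_of_le (show 1 ≤ n from hn) with h1 | h1
    · exact ⟨1, by simp [← h1]⟩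
    · set q := n.minFac with hq
      have hqp : q.Prime := Nat.minFac_prime (by omega)
      have hqd : q ∣ n := Nat.minFac_dvd n
      obtain ⟨x, hx⟩ := key q hqp.pos (hfac q hqp hqd)
      obtain ⟨m, hm⟩ := hqd
      have hm0 : 0 < m := Nat.pos_of_ne_zero (by rintro rfl; simp at hm; omega)
      have hmn : m < n := by
        have := hqp.two_le; nlinarith
      obtain ⟨y, hy⟩ := ih m hmn hm0 fun r hr hrm => hfac r hr (hrm.trans ⟨q, by rw [hm, mul_comm]⟩)
      exact ⟨x * y, by push_cast [hm]; rw [mul_pow, hx, hy]⟩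

private theorem part2 (p : ℕ) (hp : p.Prime) (d : ℕ) (hdvd : d ∣ p - 1) (hd : 2 ≤ d)
    (S : Set ℕ) (hS1 : ∀ n ∈ S, 0 < n ∧ n ≤ p - 1)
    (hS2 : ∀ n ∈ S, ∃ x : (ZMod p)ˣ, (x : ZMod p) ^ d = (n : ZMod p)) :
    (S.ncard : ℝ) ≤ ((p : ℝ) - 1) / (d : ℝ) := by
  haveI : Fact p.Prime := ⟨hp⟩
  set φ : (ZMod p)ˣ →* (ZMod p)ˣ := powMonoidHom d with hφ
  have hcardG : Nat.card (ZMod p)ˣ = p - 1 := by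
    simp [Nat.card_eq_fintype_card, ZMod.card_units_eq_totient, Nat.totient_prime hp]
  -- kernel has at least d elements
  have hker : d ≤ Nat.card φ.ker := by
    obtain ⟨g, hg⟩ := IsCyclic.exists_generator (α := (ZMod p)ˣ)
    have hog : orderOf g = p - 1 := by
      rw [orderOf_eq_card_of_forall_mem_zpowers hg, Nat.card_eq_fintype_card] at *
      omega
    set h := g ^ ((p - 1) / d) with hh
    have hp1 : 0 < p - 1 := Nat.sub_pos_of_lt hp.one_lt
    have hd0 : 0 < d := by omega
    have hoh : orderOf h = d := by
      rw [hh, orderOf_pow, hog, Nat.gcd_eq_right (Nat.div_dvd_of_dvd hdvd),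
        Nat.div_div_self hdvd (by omega)]
    have hle : Subgroup.zpowers h ≤ φ.ker := by
      intro x hx
      obtain ⟨k, rfl⟩ := Subgroup.mem_zpowers_iff.mp hx
      have : h ^ d = 1 := by rw [← hoh]; exact pow_orderOf_eq_one h
      simp only [MonoidHom.mem_ker, hφ, powMonoidHom_apply]
      rw [← zpow_natCast, ← zpow_mul, mul_comm, zpow_mul, zpow_natCast, this, one_zpow]
    calc d = Nat.card (Subgroup.zpowers h) := by
              rw [Nat.card_zpowers, hoh]
      _ ≤ Nat.card φ.ker := Subgroup.card_le_of_le hle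
  have hprod : Nat.card φ.range * Nat.card φ.ker = p - 1 := by
    rw [← hcardG, Subgroup.card_eq_card_quotient_mul_card_subgroup φ.ker,
      Nat.card_congr (QuotientGroup.quotientKerEquivRange φ).toEquiv]
  -- S injects into the image in ZMod p of the range
  set T : Set (ZMod p) := (fun u : (ZMod p)ˣ => (u : ZMod p)) '' (φ.range : Set (ZMod p)ˣ)
    with hT
  have hTcard : T.ncard = Nat.card φ.range := by
    rw [hT, Set.ncard_image_of_injective _ (fun a b h => Units.ext h), ← Nat.card_coe_set_eq]
    rfl
  have hmaps : ∀ n ∈ S, (n : ZMod p) ∈ T := by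
    intro n hn
    obtain ⟨x, hx⟩ := hS2 n hn
    exact ⟨x ^ d, ⟨x, rfl⟩, by push_cast; exact hx⟩
  have hinj : Set.InjOn (fun n : ℕ => (n : ZMod p)) S := by
    intro a ha b hb hab
    have h1 := hS1 a ha; have h2 := hS1 b hb
    have : (a : ZMod p).val = (b : ZMod p).val := congrArg ZMod.val hab
    rwa [ZMod.val_natCast_of_lt (by omega), ZMod.val_natCast_of_lt (by omega)] at this
  have hScard : S.ncard ≤ Nat.card φ.range := by
    rw [← hTcard]
    exact Set.ncard_le_ncard_of_injOn _ hmaps hinj (Set.toFinite T)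
  -- conclude
  have hmul : S.ncard * d ≤ p - 1 := by
    calc S.ncard * d ≤ Nat.card φ.range * Nat.card φ.ker :=
          Nat.mul_le_mul hScard hker
      _ = p - 1 := hprod
  rw [le_div_iff₀ (by positivity : (0:ℝ) < d)]
  have : ((p:ℝ) - 1) = ((p - 1 : ℕ) : ℝ) := by
    have := hp.one_lt; push_cast [Nat.cast_sub (by omega : 1 ≤ p)]; ring
  rw [this]
  exact_mod_cast hmul

theorem stmt10 (p : ℕ) (hp : p.Prime) (d : ℕ) (hdvd : d ∣ p - 1) (hd : 2 ≤ d) :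
    (∀ n : ℕ, 0 < n → n ≤ p - 1 →
        (∀ q : ℕ, q.Prime → q ∣ n → q < leastDPowNonRes p d) →
        ∃ x : (ZMod p)ˣ, (x : ZMod p) ^ d = (n : ZMod p)) ∧
    ({n : ℕ | 0 < n ∧ n ≤ p - 1 ∧
        ∀ q : ℕ, q.Prime → q ∣ n → q < leastDPowNonRes p d}.ncard : ℝ) ≤
      ((p : ℝ) - 1) / (d : ℝ) := by
  refine ⟨fun n hn _ hfac => part1 p d n hn hfac, ?_⟩
  exact part2 p hp d hdvd hd _ (fun n hn => ⟨hn.1, hn.2.1⟩)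
    (fun n hn => part1 p d n hn.1 hn.2.2)
end

section
/- Let d be a positive integer such that every odd prime factor of d is greater than 2·(ω(d)+1). Then among any 2·(ω(d)+1) consecutive integers there is at least one coprime to d; equivalently, j(d) ≤ 2·(ω(d)+1). -/
theorem stmt18 (d : ℕ) (hd : 0 < d)
    (h : ∀ q : ℕ, q.Prime → q ∣ d → q ≠ 2 → 2 * (d.primeFactors.card + 1) < q) :
    (∀ b : ℤ, ∃ k : ℤ, b < k ∧ k ≤ b + 2 * (d.primeFactors.card + 1) ∧
        IsCoprime k (d : ℤ)) ∧
      jacobsthal d ≤ 2 * (d.primeFactors.card + 1) := by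
  set N := d.primeFactors.card with hN
  have main : ∀ b : ℤ, ∃ k : ℤ, b < k ∧ k ≤ b + 2 * (N + 1) ∧ IsCoprime k (d : ℤ) := by
    intro b
    set o : ℤ := if Even b then b + 1 else b + 2 with ho
    have hodd : Odd o := by
      rcases Int.even_or_odd b with hb | hb
      · simp only [ho, if_pos hb]; exact Even.add_one hb
      · simp only [ho, if_neg (Int.not_even_iff_odd.mpr hb)]
        exact hb.add_even (by decide)
    have hbo : b < o := by
      rcases Int.even_or_odd b with hb | hb
      · simp only [ho, if_pos hb]; omega
      · simp only [ho, if_neg (Int.not_even_iff_odd.mpr hb)]; omega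
    have ho2 : o ≤ b + 2 := by
      rcases Int.even_or_odd b with hb | hb
      · simp only [ho, if_pos hb]; omega
      · simp only [ho, if_neg (Int.not_even_iff_odd.mpr hb)]; omega
    by_contra hcon
    push_neg at hcon
    have bad : ∀ i : ℕ, i < N + 1 → ¬ IsCoprime (o + 2 * (i : ℤ)) (d : ℤ) := by
      intro i hi
      have hi0 : (0:ℤ) ≤ (i:ℤ) := Int.natCast_nonneg i
      have h1 : b < o + 2 * (i : ℤ) := by omega
      have hiN : (i : ℤ) ≤ N := by exact_mod_cast Nat.lt_succ_iff.mp hi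
      have h2 : o + 2 * (i : ℤ) ≤ b + 2 * ((N : ℤ) + 1) := by omega
      exact hcon (o + 2 * (i : ℤ)) h1 h2
    -- For each bad i, minFac of the gcd is an odd prime factor of d
    have key : ∀ i ∈ Finset.range (N + 1),
        (Int.gcd (o + 2 * (i : ℤ)) (d : ℤ)).minFac ∈ d.primeFactors.erase 2 := by
      intro i hi
      rw [Finset.mem_range] at hi
      set g := Int.gcd (o + 2 * (i : ℤ)) (d : ℤ) with hg
      have hg1 : g ≠ 1 := by
        intro h1
        exact bad i hi (Int.isCoprime_iff_gcd_eq_one.mpr h1)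
      have hp : g.minFac.Prime := Nat.minFac_prime hg1
      have hdvdg : ((g.minFac : ℤ)) ∣ (g : ℤ) := Int.natCast_dvd_natCast.mpr g.minFac_dvd
      have hdvdk : (g.minFac : ℤ) ∣ (o + 2 * (i : ℤ)) :=
        hdvdg.trans (Int.gcd_dvd_left _ _)
      have hdvdd : g.minFac ∣ d := by
        have := hdvdg.trans (Int.gcd_dvd_right (a := o + 2 * (i : ℤ)) (b := (d : ℤ)))
        exact_mod_cast this
      have hne2 : g.minFac ≠ 2 := by
        intro h2
        rw [h2] at hdvdk
        have h2' : (2 : ℤ) ∣ o + 2 * (i : ℤ) := by exact_mod_cast hdvdk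
        rcases hodd with ⟨t, ht⟩
        omega
      exact Finset.mem_erase.mpr ⟨hne2, Nat.mem_primeFactors.mpr ⟨hp, hdvdd, hd.ne'⟩⟩
    have hcard : (d.primeFactors.erase 2).card < (Finset.range (N + 1)).card := by
      rw [Finset.card_range]
      calc (d.primeFactors.erase 2).card ≤ d.primeFactors.card := Finset.card_erase_le
        _ < N + 1 := Nat.lt_succ_self N
    obtain ⟨i, hi, j, hj, hij, heq⟩ :=
      Finset.exists_ne_map_eq_of_card_lt_of_maps_to hcard key
    -- WLOG i < j
    rw [Finset.mem_range] at hi hj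
    wlog hlt : i < j generalizing i j
    · exact this j hj i hi hij.symm heq.symm (by omega)
    set p := (Int.gcd (o + 2 * (i : ℤ)) (d : ℤ)).minFac with hpdef
    have hp : p.Prime := Nat.minFac_prime (by
      intro h1
      exact bad i hi (Int.isCoprime_iff_gcd_eq_one.mpr h1))
    have hmem := key i (Finset.mem_range.mpr hi)
    rw [← hpdef] at hmem
    obtain ⟨hne2, hmem'⟩ := Finset.mem_erase.mp hmem
    obtain ⟨_, hpd, _⟩ := Nat.mem_primeFactors.mp hmem'
    have hdvdi : (p : ℤ) ∣ (o + 2 * (i : ℤ)) :=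
      (Int.natCast_dvd_natCast.mpr (Nat.minFac_dvd _)).trans (Int.gcd_dvd_left _ _)
    have hdvdj : (p : ℤ) ∣ (o + 2 * (j : ℤ)) := by
      have h1 : p ∣ Int.gcd (o + 2 * (j : ℤ)) (d : ℤ) := by
        rw [heq]; exact Nat.minFac_dvd _
      exact (Int.natCast_dvd_natCast.mpr h1).trans (Int.gcd_dvd_left _ _)
    have hdvddiff : (p : ℤ) ∣ 2 * ((j : ℤ) - i) := by
      have := dvd_sub hdvdj hdvdi
      have h' : (o + 2 * (j : ℤ)) - (o + 2 * (i : ℤ)) = 2 * ((j : ℤ) - i) := by ring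
      rwa [h'] at this
    have hpint : Prime (p : ℤ) := Nat.prime_iff_prime_int.mp hp
    have hdvd' : (p : ℤ) ∣ ((j : ℤ) - i) := by
      rcases hpint.dvd_mul.mp hdvddiff with h2 | h3
      · exfalso
        have hpd2 : p ∣ 2 := by exact_mod_cast h2
        exact hne2 ((Nat.prime_dvd_prime_iff_eq hp Nat.prime_two).mp hpd2)
      · exact h3
    have hle : (p : ℤ) ≤ (j : ℤ) - i := Int.le_of_dvd (by omega) hdvd'
    have hbig := h p hp hpd hne2
    have : (j : ℤ) ≤ N := by exact_mod_cast Nat.lt_succ_iff.mp hj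
    have : (p : ℤ) > 2 * (N + 1) := by exact_mod_cast hbig
    omega
  refine ⟨main, ?_⟩
  apply Nat.sInf_le
  refine ⟨by positivity, fun b => ?_⟩
  obtain ⟨k, h1, h2, h3⟩ := main b
  exact ⟨k, h1, by push_cast; linarith, h3⟩
end
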